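/- Let n ≥ 3 and let s₁,...,sₙ > 0 with sum S satisfy max(s₁,...,sₙ) < S/2. Then there exists a vector ℓ ∈ ℝⁿ with all entries strictly positive, ℓ₁+⋯+ℓₙ = 1, and Σₖ ℓₖ·(cos θₖ, sin θₖ) = 0, where θₖ = (2π/S)(s₁+⋯+sₖ); i.e., there is a unit-perimeter convex n-gon with external angle 2πsₖ/S at its k-th vertex and all edge lengths positive. -/

import Mathlib

lemma key18 (a : ℝ) (h : Real.cos a ≠ 0) :
    (Real.tan a : ℂ) * (Complex.exp (2*a*Complex.I) + 1)
      = -Complex.I * (Complex.exp (2*a*Complex.I) - 1) := by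
  have hs := Real.sin_sq_add_cos_sq a
  have h1 : Real.tan a * (Real.cos (2*a) + 1) = Real.sin (2*a) := by
    rw [Real.tan_eq_sin_div_cos, Real.cos_two_mul, Real.sin_two_mul]
    field_simp; ring
  have h2 : Real.tan a * Real.sin (2*a) = 1 - Real.cos (2*a) := by
    rw [Real.tan_eq_sin_div_cos, Real.cos_two_mul, Real.sin_two_mul]
    field_simp; linear_combination 2 * hs
  rw [show (2*(a:ℂ))*Complex.I = ((2*a:ℝ):ℂ)*Complex.I by push_cast; ring,
    Complex.exp_mul_I, ← Complex.ofReal_cos, ← Complex.ofReal_sin]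
  apply Complex.ext <;>
    simp only [Complex.add_re, Complex.add_im, Complex.sub_re, Complex.sub_im,
      Complex.mul_re, Complex.mul_im, Complex.neg_re, Complex.neg_im,
      Complex.I_re, Complex.I_im, Complex.ofReal_re, Complex.ofReal_im,
      Complex.one_re, Complex.one_im] <;>
    ring_nf <;> ring_nf at h1 h2 <;> linarith [h1, h2]

theorem stmt_18 (n : ℕ) (hn : 3 ≤ n) (s : Fin n → ℝ) (hpos : ∀ k, 0 < s k)
    (S : ℝ) (hS : S = ∑ k, s k) (hmax : ∀ k, s k < S / 2) :
    ∃ ℓ : Fin n → ℝ, (∀ k, 0 < ℓ k) ∧ (∑ k, ℓ k = 1) ∧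
      (∑ k, ℓ k * Real.cos ((2 * Real.pi / S) * ∑ t ∈ Finset.Iic k, s t)) = 0 ∧
      (∑ k, ℓ k * Real.sin ((2 * Real.pi / S) * ∑ t ∈ Finset.Iic k, s t)) = 0 := by
  have hn0 : 0 < n := by omega
  haveI : NeZero n := ⟨by omega⟩
  have hSpos : 0 < S := by
    rw [hS]; exact Finset.sum_pos (fun k _ => hpos k) ⟨⟨0, hn0⟩, Finset.mem_univ _⟩
  set s' : ℕ → ℝ := fun i => if h : i < n then s ⟨i, h⟩ else 0 with hs'
  set θ : ℕ → ℝ := fun m => (2 * Real.pi / S) * ∑ t ∈ Finset.range m, s' t with hθ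
  set g : ℕ → ℂ := fun m => Complex.exp ((θ m : ℂ) * Complex.I) with hg
  set a : Fin n → ℝ := fun k => Real.tan (Real.pi * s k / S) with ha
  have hang : ∀ k : Fin n, 0 < Real.pi * s k / S ∧ Real.pi * s k / S < Real.pi / 2 := by
    intro k
    constructor
    · exact div_pos (mul_pos Real.pi_pos (hpos k)) hSpos
    · rw [div_lt_div_iff₀ hSpos (by norm_num : (0:ℝ) < 2)]
      have := hmax k
      nlinarith [Real.pi_pos]
  have hcos : ∀ k : Fin n, 0 < Real.cos (Real.pi * s k / S) := fun k =>
    Real.cos_pos_of_mem_Ioo ⟨by linarith [(hang k).1, Real.pi_pos], (hang k).2⟩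
  have hapos : ∀ k : Fin n, 0 < a k := fun k =>
    Real.tan_pos_of_pos_of_lt_pi_div_two (hang k).1 (hang k).2
  have hsum' : ∑ t ∈ Finset.range n, s' t = S := by
    rw [hS, ← Fin.sum_univ_eq_sum_range]
    exact Finset.sum_congr rfl (fun k _ => by simp [hs'])
  have g0 : g 0 = 1 := by simp [hg, hθ]
  have gn : g n = 1 := by
    have hθn : θ n = 2 * Real.pi := by
      simp only [hθ]; rw [hsum']; field_simp
    simp only [hg, hθn]
    rw [show ((2 * Real.pi : ℝ) : ℂ) * Complex.I = 2 * Real.pi * Complex.I by push_cast; ring]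
    exact Complex.exp_two_pi_mul_I
  have step : ∀ k : Fin n, (a k : ℂ) * (g (↑k + 1) + g ↑k) = -Complex.I * (g (↑k + 1) - g ↑k) := by
    intro k
    have hθstep : θ (↑k + 1) = θ ↑k + 2 * (Real.pi * s k / S) := by
      simp only [hθ, Finset.sum_range_succ]
      have hsk : s' ↑k = s k := by simp [hs', k.isLt]
      rw [hsk]; field_simp
    have hgstep : g (↑k + 1) = g ↑k * Complex.exp (2 * ((Real.pi * s k / S : ℝ) : ℂ) * Complex.I) := by
      simp only [hg, hθstep]
      rw [← Complex.exp_add]; push_cast; ring_nf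
    have hk := key18 (Real.pi * s k / S) (ne_of_gt (hcos k))
    rw [hgstep]
    simp only [ha]
    linear_combination (g ↑k) * hk
  have T1 : ∑ k : Fin n, (a k : ℂ) * (g (↑k + 1) + g ↑k) = 0 := by
    calc ∑ k : Fin n, (a k : ℂ) * (g (↑k + 1) + g ↑k)
        = ∑ k : Fin n, -Complex.I * (g (↑k + 1) - g ↑k) :=
          Finset.sum_congr rfl (fun k _ => step k)
      _ = ∑ i ∈ Finset.range n, -Complex.I * (g (i + 1) - g i) :=
          Fin.sum_univ_eq_sum_range (fun i => -Complex.I * (g (i + 1) - g i)) n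
      _ = -Complex.I * ∑ i ∈ Finset.range n, (g (i + 1) - g i) := by
          rw [Finset.mul_sum]
      _ = -Complex.I * (g n - g 0) := by rw [Finset.sum_range_sub]
      _ = 0 := by rw [gn, g0]; ring
  have gshift : ∀ k : Fin n, g (↑k + 1) = g ↑(k + 1) := by
    intro k
    have h1 : ((1 : Fin n) : ℕ) = 1 := by
      simp [Fin.val_one', Nat.mod_eq_of_lt (by omega : 1 < n)]
    have hadd : ((k + 1 : Fin n) : ℕ) = (↑k + 1) % n := by
      rw [Fin.add_def, h1]
    by_cases hlt : (↑k : ℕ) + 1 < n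
    · rw [hadd, Nat.mod_eq_of_lt hlt]
    · have hke : (↑k : ℕ) + 1 = n := by omega
      rw [hadd, hke, Nat.mod_self, gn, g0]
  have T2 : ∑ k : Fin n, (a (k + 1) : ℂ) * g (↑k + 1) = ∑ k : Fin n, (a k : ℂ) * g ↑k := by
    calc ∑ k : Fin n, (a (k + 1) : ℂ) * g (↑k + 1)
        = ∑ k : Fin n, (a (k + 1) : ℂ) * g ↑(k + 1) :=
          Finset.sum_congr rfl (fun k _ => by rw [gshift k])
      _ = ∑ k : Fin n, (a k : ℂ) * g ↑k :=
          Equiv.sum_comp (Equiv.addRight (1 : Fin n)) (fun k => (a k : ℂ) * g ↑k)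
  have Z : ∑ k : Fin n, ((a k + a (k + 1) : ℝ) : ℂ) * g (↑k + 1) = 0 := by
    have hsplit : ∀ k : Fin n, ((a k + a (k + 1) : ℝ) : ℂ) * g (↑k + 1)
        = (a k : ℂ) * g (↑k + 1) + (a (k + 1) : ℂ) * g (↑k + 1) := by
      intro k; push_cast; ring
    rw [Finset.sum_congr rfl (fun k _ => hsplit k), Finset.sum_add_distrib, T2,
      ← Finset.sum_add_distrib]
    calc ∑ k : Fin n, ((a k : ℂ) * g (↑k + 1) + (a k : ℂ) * g ↑k)
        = ∑ k : Fin n, (a k : ℂ) * (g (↑k + 1) + g ↑k) :=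
          Finset.sum_congr rfl (fun k _ => by ring)
      _ = 0 := T1
  have hIic : ∀ k : Fin n, (2 * Real.pi / S) * ∑ t ∈ Finset.Iic k, s t = θ (↑k + 1) := by
    intro k
    simp only [hθ]
    congr 1
    refine Finset.sum_nbij' (fun t => (t : ℕ)) (fun t => ⟨t % n, Nat.mod_lt _ hn0⟩)
      ?_ ?_ ?_ ?_ ?_
    · intro t ht
      simp only [Finset.mem_Iic, Fin.le_def] at ht
      simp only [Finset.mem_range]; omega
    · intro t ht
      simp only [Finset.mem_range] at ht
      simp only [Finset.mem_Iic, Fin.le_def]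
      have : t % n = t := Nat.mod_eq_of_lt (by omega)
      simp [this]; omega
    · intro t _; exact Fin.ext (by simp [Nat.mod_eq_of_lt t.isLt])
    · intro t ht
      simp only [Finset.mem_range] at ht
      simp [Nat.mod_eq_of_lt (by omega : t < n)]
    · intro t _
      simp [hs', t.isLt]
  set c : ℝ := ∑ k : Fin n, (a k + a (k + 1)) with hc
  have hcpos : 0 < c :=
    Finset.sum_pos (fun k _ => add_pos (hapos k) (hapos (k + 1))) ⟨⟨0, hn0⟩, Finset.mem_univ _⟩
  refine ⟨fun k => (a k + a (k + 1)) / c, fun k => div_pos (add_pos (hapos k) (hapos (k+1))) hcpos,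
    by rw [← Finset.sum_div]; exact div_self (ne_of_gt hcpos), ?_, ?_⟩
  · have hre := congrArg Complex.re Z
    rw [Complex.re_sum] at hre
    simp only [hg, Complex.mul_re, Complex.ofReal_re, Complex.ofReal_im,
      Complex.exp_ofReal_mul_I_re, Complex.exp_ofReal_mul_I_im, zero_mul, sub_zero] at hre
    calc ∑ k : Fin n, (a k + a (k + 1)) / c *
          Real.cos ((2 * Real.pi / S) * ∑ t ∈ Finset.Iic k, s t)
        = (∑ k : Fin n, (a k + a (k + 1)) * Real.cos (θ (↑k + 1))) / c := by
          rw [Finset.sum_div]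
          exact Finset.sum_congr rfl (fun k _ => by rw [hIic k]; ring)
      _ = 0 := by rw [hre]; simp
  · have him := congrArg Complex.im Z
    rw [Complex.im_sum] at him
    simp only [hg, Complex.mul_im, Complex.ofReal_re, Complex.ofReal_im,
      Complex.exp_ofReal_mul_I_re, Complex.exp_ofReal_mul_I_im, zero_mul, add_zero] at him
    calc ∑ k : Fin n, (a k + a (k + 1)) / c *
          Real.sin ((2 * Real.pi / S) * ∑ t ∈ Finset.Iic k, s t)
        = (∑ k : Fin n, (a k + a (k + 1)) * Real.sin (θ (↑k + 1))) / c := by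
          rw [Finset.sum_div]
          exact Finset.sum_congr rfl (fun k _ => by rw [hIic k]; ring)
      _ = 0 := by rw [him]; simp
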